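/- Let R be a well-mixed difference ring and a ∈ R. Then a belongs to every transformally prime ideal of R if and only if aⁿ = 0 for some n ∈ ℕ[σ], where for n = Σ mᵢσⁱ we set aⁿ = Π σⁱ(a)^{mᵢ}. -/

import Mathlib

section Aux

variable {R : Type*} [CommRing R] (σ : R →+* R)

/-- Auxiliary ideal: elements `u` with `σ^i v * σ^j u ∈ p` for all `i, j`. -/
def Dideal (p : Ideal R) (v : R) : Ideal R where
  carrier := {u | ∀ i j : ℕ, (⇑σ)^[i] v * (⇑σ)^[j] u ∈ p}
  add_mem' := by
    intro x y hx hy i j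
    simp only [Set.mem_setOf_eq] at *
    rw [iterate_map_add, mul_add]
    exact p.add_mem (hx i j) (hy i j)
  zero_mem' := by
    intro i j
    simp [iterate_map_zero]
  smul_mem' := by
    intro r u hu i j
    simp only [smul_eq_mul, Set.mem_setOf_eq] at *
    rw [iterate_map_mul, mul_left_comm]
    exact p.mul_mem_left _ (hu i j)

lemma mem_Dideal_iff (p : Ideal R) (v u : R) :
    u ∈ Dideal σ p v ↔ ∀ i j : ℕ, (⇑σ)^[i] v * (⇑σ)^[j] u ∈ p := Iff.rfl

end Aux

/-- In a well-mixed difference ring, `a` lies in every transformally prime ideal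
iff `aⁿ = 0` for some nonzero `n = Σ mᵢσⁱ ∈ ℕ[σ]`, where `aⁿ = Π σⁱ(a)^{mᵢ}`. -/
theorem stmt_4 {R : Type*} [CommRing R] (σ : R →+* R)
    (hwm : ∀ a b : R, a * b = 0 → a * σ b = 0) (a : R) :
    (∀ p : Ideal R, p.IsPrime → (∀ x : R, σ x ∈ p ↔ x ∈ p) → a ∈ p) ↔
    ∃ m : ℕ →₀ ℕ, m ≠ 0 ∧ (m.prod fun i e => ((⇑σ)^[i] a) ^ e) = 0 := by
  constructor
  · -- hard direction
    intro H
    by_contra hne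
    push_neg at hne
    -- the multiplicative set S
    set S : Set R := {s | ∃ m : ℕ →₀ ℕ, m ≠ 0 ∧ s = m.prod fun i e => ((⇑σ)^[i] a) ^ e}
      with hS
    have haS : a ∈ S := by
      refine ⟨Finsupp.single 0 1, by simp, ?_⟩
      rw [Finsupp.prod_single_index] <;> simp
    have hSmul : ∀ s ∈ S, ∀ t ∈ S, s * t ∈ S := by
      rintro s ⟨m₁, hm₁, rfl⟩ t ⟨m₂, hm₂, rfl⟩
      refine ⟨m₁ + m₂, ?_, ?_⟩
      · intro h
        rw [Finsupp.add_eq_zero_iff] at h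
        exact hm₁ h.1
      · rw [Finsupp.prod_add_index (fun i _ => pow_zero _) (fun i _ x y => pow_add _ x y)]
    have hSsig : ∀ s ∈ S, σ s ∈ S := by
      rintro s ⟨m, hm, rfl⟩
      refine ⟨m.embDomain ⟨Nat.succ, Nat.succ_injective⟩, ?_, ?_⟩
      · intro h
        exact hm (Finsupp.embDomain_eq_zero.1 h)
      · rw [Finsupp.prod_embDomain]
        rw [map_finsuppProd]
        refine Finsupp.prod_congr fun i hi => ?_
        simp [map_pow, Function.iterate_succ_apply']
    have hS0 : (0 : R) ∉ S := by
      rintro ⟨m, hm, hm0⟩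
      exact hne m hm hm0.symm
    -- Zorn's lemma on well-mixed ideals disjoint from S
    set 𝒜 : Set (Ideal R) :=
      {I | (∀ x y : R, x * y ∈ I → x * σ y ∈ I) ∧ ∀ s ∈ S, s ∉ I} with h𝒜
    have hbot : (⊥ : Ideal R) ∈ 𝒜 := by
      constructor
      · intro x y hxy
        rw [Ideal.mem_bot] at *
        exact hwm x y hxy
      · intro s hs hmem
        rw [Ideal.mem_bot] at hmem
        exact hS0 (hmem ▸ hs)
    obtain ⟨p, -, hp𝒜, hpmax⟩ := zorn_le_nonempty₀ 𝒜 (fun c hc hchain y hy => by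
      refine ⟨sSup c, ⟨?_, ?_⟩, fun z hz => le_sSup hz⟩
      · intro x u hxu
        rw [Submodule.mem_sSup_of_directed ⟨y, hy⟩ hchain.directedOn] at hxu ⊢
        obtain ⟨I, hIc, hI⟩ := hxu
        exact ⟨I, hIc, (hc hIc).1 x u hI⟩
      · intro s hs hmem
        rw [Submodule.mem_sSup_of_directed ⟨y, hy⟩ hchain.directedOn] at hmem
        obtain ⟨I, hIc, hI⟩ := hmem
        exact (hc hIc).2 s hs hI) ⊥ hbot
    obtain ⟨hpwm, hpS⟩ := hp𝒜
    -- basic stability facts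
    have hsig : ∀ x ∈ p, σ x ∈ p := fun x hx => by
      have := hpwm 1 x (by rwa [one_mul]); rwa [one_mul] at this
    have hsig' : ∀ (j : ℕ), ∀ x ∈ p, (⇑σ)^[j] x ∈ p := by
      intro j
      induction j with
      | zero => intro x hx; simpa using hx
      | succ n ih =>
        intro x hx
        rw [Function.iterate_succ_apply']
        exact hsig _ (ih x hx)
    -- the closure J x
    set J : R → Ideal R := fun x => sInf {I : Ideal R | p ≤ I ∧ x ∈ I ∧
      ∀ u v : R, u * v ∈ I → u * σ v ∈ I} with hJ
    have hJle : ∀ x, p ≤ J x := fun x => le_sInf fun I hI => hI.1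
    have hJmem : ∀ x, x ∈ J x := fun x => Submodule.mem_sInf.2 fun I hI => hI.2.1
    have hJwm : ∀ x, ∀ u v : R, u * v ∈ J x → u * σ v ∈ J x := by
      intro x u v huv
      rw [Submodule.mem_sInf] at huv ⊢
      intro I hI
      exact hI.2.2 u v (huv I hI)
    -- maximality: if x ∉ p then J x meets S
    have hJS : ∀ x : R, x ∉ p → ∃ s ∈ S, s ∈ J x := by
      intro x hx
      by_contra hcon
      push_neg at hcon
      have h𝒜' : J x ∈ 𝒜 := ⟨hJwm x, hcon⟩
      have heq : J x = p := le_antisymm (hpmax h𝒜' (hJle x)) (hJle x)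
      exact hx (heq ▸ hJmem x)
    -- Dideal facts
    have hDwm : ∀ v : R, ∀ x y : R, x * y ∈ Dideal σ p v → x * σ y ∈ Dideal σ p v := by
      intro v x y hxy i j
      have h1 : (⇑σ)^[i] v * (⇑σ)^[j] (x * y) ∈ p := hxy i j
      rw [iterate_map_mul] at h1
      have h2 := hpwm ((⇑σ)^[i] v * (⇑σ)^[j] x) ((⇑σ)^[j] y) (by rwa [mul_assoc])
      have h3 : (⇑σ)^[j] (σ y) = σ ((⇑σ)^[j] y) := by
        rw [← Function.iterate_succ_apply σ j y, Function.iterate_succ_apply']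
      rw [iterate_map_mul, h3, ← mul_assoc]
      exact h2
    have hDp : ∀ v : R, p ≤ Dideal σ p v := by
      intro v w hw i j
      exact p.mul_mem_left _ (hsig' j w hw)
    -- key fact: x * y ∈ p → y ∈ Dideal x
    have hkey : ∀ x y : R, x * y ∈ p → y ∈ Dideal σ p x := by
      intro x y hxy
      have hij : ∀ i j : ℕ, (⇑σ)^[i] x * (⇑σ)^[j] y ∈ p := by
        have base : ∀ i : ℕ, (⇑σ)^[i] x * y ∈ p := by
          intro i
          induction i with
          | zero => simpa using hxy
          | succ n ih =>
            have := hpwm y ((⇑σ)^[n] x) (by rwa [mul_comm])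
            rw [Function.iterate_succ_apply', mul_comm]
            exact this
        intro i j
        induction j with
        | zero => simpa using base i
        | succ n ih =>
          rw [Function.iterate_succ_apply']
          exact hpwm ((⇑σ)^[i] x) ((⇑σ)^[n] y) ih
      exact hij
    -- primeness
    have hprime : p.IsPrime := by
      constructor
      · intro htop
        exact hpS a haS (htop ▸ Submodule.mem_top)
      · intro x y hxy
        by_contra hcon
        push_neg at hcon
        obtain ⟨hx, hy⟩ := hcon
        -- J y ≤ Dideal x
        have h1 : J y ≤ Dideal σ p x :=
          sInf_le ⟨hDp x, hkey x y hxy, hDwm x⟩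
        -- for v ∈ J y, x ∈ Dideal v
        have h2 : ∀ v ∈ J y, x ∈ Dideal σ p v := by
          intro v hv i j
          have := h1 hv j i
          rwa [mul_comm]
        -- hence J x ≤ Dideal v for each v ∈ J y
        have h3 : ∀ v ∈ J y, ∀ u ∈ J x, v * u ∈ p := by
          intro v hv u hu
          have : J x ≤ Dideal σ p v := sInf_le ⟨hDp v, h2 v hv, hDwm v⟩
          have h4 := this hu 0 0
          simpa using h4
        obtain ⟨s, hsS, hsJ⟩ := hJS x hx
        obtain ⟨t, htS, htJ⟩ := hJS y hy
        exact hpS (t * s) (hSmul t htS s hsS) (h3 t htJ s hsJ)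
    -- reflexivity
    have hrefl : ∀ x : R, σ x ∈ p ↔ x ∈ p := by
      have hq : Ideal.comap σ p ∈ 𝒜 := by
        constructor
        · intro x y hxy
          rw [Ideal.mem_comap] at *
          rw [map_mul] at *
          exact hpwm _ _ hxy
        · intro s hs hmem
          rw [Ideal.mem_comap] at hmem
          exact hpS (σ s) (hSsig s hs) hmem
      have hle : p ≤ Ideal.comap σ p := fun x hx => Ideal.mem_comap.2 (hsig x hx)
      have heq : Ideal.comap σ p = p := le_antisymm (hpmax hq hle) hle
      intro x
      constructor
      · intro hx
        have : x ∈ Ideal.comap σ p := Ideal.mem_comap.2 hx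
        rwa [heq] at this
      · exact hsig x
    exact hpS a haS (H p hprime hrefl)
  · -- easy direction
    rintro ⟨m, hm, hprod⟩ p hp hps
    have : (m.prod fun i e => ((⇑σ)^[i] a) ^ e) ∈ p := hprod ▸ p.zero_mem
    rw [Finsupp.prod] at this
    rw [Ideal.IsPrime.prod_mem_iff] at this
    obtain ⟨i, hi, hpow⟩ := this
    have hia : (⇑σ)^[i] a ∈ p := hp.mem_of_pow_mem _ hpow
    clear hi hpow
    induction i with
    | zero => simpa using hia
    | succ n ih =>
      apply ih
      rw [Function.iterate_succ_apply'] at hia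
      exact (hps _).1 hia
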